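/- Let R be a suitable ring equipped with a nice topology, and suppose that every convergent limit of units of R is a unit (i.e., every element of the topological closure of the unit group U(R) is a unit). Then R is an ℵ₀-exchange ring. -/

import Mathlib

/-- A ring is *suitable* (equivalently, an exchange ring) if whenever `x + y = 1` there are
orthogonal idempotents `e ∈ Rx`, `f ∈ Ry` with `e + f = 1`. -/
def IsSuitableRing (R : Type*) [Ring R] : Prop :=
  ∀ x y : R, x + y = 1 →
    ∃ e f : R, IsIdempotentElem e ∧ IsIdempotentElem f ∧
      (∃ r, e = r * x) ∧ (∃ s, f = s * y) ∧ e * f = 0 ∧ f * e = 0 ∧ e + f = 1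
/-- A ring topology is *linear* if `0` has a neighborhood basis consisting of left ideals. -/
def HasLinearTopology (R : Type*) [Ring R] [TopologicalSpace R] : Prop :=
  ∀ U ∈ nhds (0 : R), ∃ I : Ideal R, (I : Set R) ∈ nhds (0 : R) ∧ (I : Set R) ⊆ U
/-- A topology on a ring is *nice* if it is linear, Hausdorff, and left multiple summable
(for every summable family `(x i)` and every family `(r i)`, the family `(r i * x i)` is
summable).  Summability of a family means convergence of the net of finite partial sums,
i.e. `HasSum`/`Summable`. -/
structure IsNiceTopology (R : Type*) [Ring R] [TopologicalSpace R] : Prop where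
  linear : HasLinearTopology R
  hausdorff : T2Space R
  leftMultipleSummable : ∀ {ι : Type*} (x r : ι → R), Summable x →
    Summable fun i => r i * x i
/-- `R` is an *ℵ₀-exchange ring*: every summable family indexed by a countable set and
summing to `1` refines to a summable family of pairwise orthogonal idempotents
`e i ∈ R * x i` summing to `1`. -/
def IsAleph0ExchangeRing (R : Type*) [Ring R] [TopologicalSpace R] : Prop :=
  ∀ (ι : Type*) [Countable ι] (x : ι → R), HasSum x 1 →
    ∃ e : ι → R, Summable e ∧ (∀ i, IsIdempotentElem (e i)) ∧
      (∀ i j, i ≠ j → e i * e j = 0) ∧ (∀ i, ∃ r, e i = r * x i) ∧ HasSum e 1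

namespace A0X

variable {R : Type*} [Ring R]

/-- tails -/
def tl (x : ℕ → R) (m : ℕ) : R := 1 - ∑ k ∈ Finset.range m, x k

structure Dat (R : Type*) [Ring R] where
  E : ℕ → R
  F : R
  t : R
  u : R
  v : R
  Z : R

def Pm (x : ℕ → R) (m : ℕ) (d : Dat R) : Prop :=
  d.F = d.t * tl x m ∧ d.F * d.F = d.F ∧
  (∀ i, i < m → d.E i * d.E i = d.E i) ∧
  (∀ i j, i < m → j < m → i ≠ j → d.E i * d.E j = 0) ∧
  (∀ i, i < m → d.E i * d.F = 0) ∧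
  (∀ i, i < m → d.F * d.E i = 0) ∧
  ((∑ i ∈ Finset.range m, d.E i) + d.F = 1)

def Q (x : ℕ → R) (m : ℕ) (d d' : Dat R) : Prop :=
  d'.E m = d'.Z * x m ∧
  (∀ i, i ≠ m → d'.E i = d'.v * d.E i) ∧
  d'.u = 1 + d'.E m + d'.F - d.F ∧
  d'.u * d'.v = 1 ∧ d'.v * d'.u = 1 ∧
  d.F * d'.F = d'.F

theorem corner_split (hsuit : IsSuitableRing R) (f a : R)
    (hf : f * f = f) (hfa : f * a = a) (haf : a * f = a) :
    ∃ g h z w : R, g = z * a ∧ h = w * (f - a) ∧ f * z = z ∧ f * w = w ∧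
      g * g = g ∧ h * h = h ∧ g * h = 0 ∧ h * g = 0 ∧ g + h = f ∧
      f * g = g ∧ g * f = g ∧ f * h = h ∧ h * f = h := by
  obtain ⟨E, F, hE, hF, ⟨r, hr⟩, ⟨s, hs⟩, hEF, hFE, hsum⟩ :=
    hsuit (a + (1 - f)) (f - a) (by abel)
  have hsubf : (f - a) * f = f - a := by rw [sub_mul, hf, haf]
  have hfsub : f * (f - a) = f - a := by rw [mul_sub, hf, hfa]
  have hFf : F * f = F := by rw [hs, mul_assoc, hsubf]
  have hFF : F * F = F := hF
  have hfh0 : f * (f * F) = f * F := by rw [← mul_assoc, hf]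
  have hh0f : (f * F) * f = f * F := by rw [mul_assoc, hFf]
  have hh0h0 : (f * F) * (f * F) = f * F := by
    calc (f * F) * (f * F) = f * ((F * f) * F) := by noncomm_ring
      _ = f * F := by rw [hFf, hFF]
  have hg0g0 : (f - f * F) * (f - f * F) = f - f * F := by
    rw [sub_mul, mul_sub, mul_sub, hf, hfh0, hh0f, hh0h0, sub_self, sub_zero]
  have hg0f : (f - f * F) * f = f - f * F := by rw [sub_mul, hf, hh0f]
  have hfg0 : f * (f - f * F) = f - f * F := by rw [mul_sub, hf, hfh0]
  have hg0h0 : (f - f * F) * (f * F) = 0 := by rw [sub_mul, hfh0, hh0h0, sub_self]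
  have hh0g0 : (f * F) * (f - f * F) = 0 := by rw [mul_sub, hh0f, hh0h0, sub_self]
  have hxf : (a + (1 - f)) * f = a := by
    rw [add_mul, sub_mul, one_mul, hf, haf, sub_self, add_zero]
  have hEf : E * f = r * a := by rw [hr, mul_assoc, hxf]
  have hE1 : E = 1 - F := eq_sub_of_add_eq hsum
  have hfE : f * E = f - f * F := by rw [hE1, mul_sub, mul_one]
  have hg0mem : f - f * F = (f * r) * a := by
    calc f - f * F = (f - f * F) * f := hg0f.symm
      _ = (f * E) * f := by rw [hfE]
      _ = f * (E * f) := by rw [mul_assoc]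
      _ = (f * r) * a := by rw [hEf, mul_assoc]
  have hh0mem : f * F = (f * s) * (f - a) := by rw [hs, ← mul_assoc]
  refine ⟨f - f * F, f * F, f * r, f * s, hg0mem, hh0mem,
    by rw [← mul_assoc, hf], by rw [← mul_assoc, hf],
    hg0g0, hh0h0, hg0h0, hh0g0, by abel, hfg0, hg0f, hfh0, hh0f⟩

end A0X

namespace A0X

variable {R : Type*} [Ring R]

theorem step_ex (hsuit : IsSuitableRing R) (x : ℕ → R) (m : ℕ) (d : Dat R) (hd : Pm x m d) :
    ∃ d' : Dat R, Pm x (m + 1) d' ∧ Q x m d d' := by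
  obtain ⟨h1, h2, h3, h4, h5, h6, h7⟩ := hd
  have hfa : d.F * (d.F * d.t * x m * d.F) = d.F * d.t * x m * d.F := by
    calc d.F * (d.F * d.t * x m * d.F) = (d.F * d.F) * d.t * x m * d.F := by noncomm_ring
      _ = d.F * d.t * x m * d.F := by rw [h2]
  have haf : (d.F * d.t * x m * d.F) * d.F = d.F * d.t * x m * d.F := by
    calc (d.F * d.t * x m * d.F) * d.F = d.F * d.t * x m * (d.F * d.F) := by noncomm_ring
      _ = d.F * d.t * x m * d.F := by rw [h2]
  obtain ⟨g, h, z, w, hgz, hhw, hfz, hfw, hgg, hhh, hgh, hhg, hghF, hFg, hgF, hFh, hhF⟩ :=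
    corner_split hsuit d.F (d.F * d.t * x m * d.F) h2 hfa haf
  have htl : tl x (m+1) = tl x m - x m := by
    simp only [tl, Finset.sum_range_succ]; abel
  have hsub : d.F - d.F * d.t * x m * d.F = d.F * d.t * tl x (m+1) * d.F := by
    rw [htl]
    have e1 : d.F * d.t * (tl x m - x m) * d.F
        = d.F * (d.t * tl x m) * d.F - d.F * d.t * x m * d.F := by noncomm_ring
    rw [e1, ← h1, h2, h2]
  obtain ⟨Zc, hZc⟩ : ∃ t : R, t = z * (d.F * d.t) := ⟨_, rfl⟩
  obtain ⟨Wc, hWc⟩ : ∃ t : R, t = w * (d.F * d.t) := ⟨_, rfl⟩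
  have hgZ : g = Zc * x m * d.F := by rw [hgz, hZc]; noncomm_ring
  have hhW : h = Wc * tl x (m+1) * d.F := by rw [hhw, hsub, hWc]; noncomm_ring
  have hZg : Zc * x m * g = g := by
    calc Zc * x m * g = Zc * x m * (d.F * g) := by rw [hFg]
      _ = (Zc * x m * d.F) * g := by noncomm_ring
      _ = g * g := by rw [← hgZ]
      _ = g := hgg
  have hWh : Wc * tl x (m+1) * h = h := by
    calc Wc * tl x (m+1) * h = Wc * tl x (m+1) * (d.F * h) := by rw [hFh]
      _ = (Wc * tl x (m+1) * d.F) * h := by noncomm_ring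
      _ = h * h := by rw [← hhW]
      _ = h := hhh
  obtain ⟨em, hem⟩ : ∃ t : R, t = g * Zc * x m := ⟨_, rfl⟩
  obtain ⟨f', hf'⟩ : ∃ t : R, t = h * Wc * tl x (m+1) := ⟨_, rfl⟩
  have hemem : em * em = em := by
    rw [hem]
    calc (g * Zc * x m) * (g * Zc * x m) = g * (Zc * x m * g) * (Zc * x m) := by noncomm_ring
      _ = (g * g) * (Zc * x m) := by rw [hZg]
      _ = g * Zc * x m := by rw [hgg]; noncomm_ring
  have hemg : em * g = g := by
    rw [hem]
    calc g * Zc * x m * g = g * (Zc * x m * g) := by noncomm_ring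
      _ = g * g := by rw [hZg]
      _ = g := hgg
  have hgem : g * em = em := by
    rw [hem]
    calc g * (g * Zc * x m) = (g * g) * (Zc * x m) := by noncomm_ring
      _ = g * Zc * x m := by rw [hgg]; noncomm_ring
  have hemF : em * d.F = g := by
    rw [hem]
    calc g * Zc * x m * d.F = g * (Zc * x m * d.F) := by noncomm_ring
      _ = g * g := by rw [← hgZ]
      _ = g := hgg
  have hFem : d.F * em = em := by
    rw [hem]
    calc d.F * (g * Zc * x m) = (d.F * g) * (Zc * x m) := by noncomm_ring
      _ = g * Zc * x m := by rw [hFg]; noncomm_ring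
  have hf'f' : f' * f' = f' := by
    rw [hf']
    calc (h * Wc * tl x (m+1)) * (h * Wc * tl x (m+1))
        = h * (Wc * tl x (m+1) * h) * (Wc * tl x (m+1)) := by noncomm_ring
      _ = (h * h) * (Wc * tl x (m+1)) := by rw [hWh]
      _ = h * Wc * tl x (m+1) := by rw [hhh]; noncomm_ring
  have hhf' : h * f' = f' := by
    rw [hf']
    calc h * (h * Wc * tl x (m+1)) = (h * h) * (Wc * tl x (m+1)) := by noncomm_ring
      _ = h * Wc * tl x (m+1) := by rw [hhh]; noncomm_ring
  have hf'h : f' * h = h := by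
    rw [hf']
    calc h * Wc * tl x (m+1) * h = h * (Wc * tl x (m+1) * h) := by noncomm_ring
      _ = h * h := by rw [hWh]
      _ = h := hhh
  have hf'F : f' * d.F = h := by
    rw [hf']
    calc h * Wc * tl x (m+1) * d.F = h * (Wc * tl x (m+1) * d.F) := by noncomm_ring
      _ = h * h := by rw [← hhW]
      _ = h := hhh
  have hFf' : d.F * f' = f' := by
    rw [hf']
    calc d.F * (h * Wc * tl x (m+1)) = (d.F * h) * (Wc * tl x (m+1)) := by noncomm_ring
      _ = h * Wc * tl x (m+1) := by rw [hFh]; noncomm_ring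
  have hsubg : h = d.F - g := by rw [← hghF]; abel
  have hsubh : g = d.F - h := by rw [← hghF]; abel
  have hemh : em * h = 0 := by rw [hsubg, mul_sub, hemF, hemg, sub_self]
  have hhem : h * em = 0 := by
    rw [hem]
    calc h * (g * Zc * x m) = (h * g) * (Zc * x m) := by noncomm_ring
      _ = 0 := by rw [hhg, zero_mul]
  have hgf' : g * f' = 0 := by
    rw [hf']
    calc g * (h * Wc * tl x (m+1)) = (g * h) * (Wc * tl x (m+1)) := by noncomm_ring
      _ = 0 := by rw [hgh, zero_mul]
  have hf'g : f' * g = 0 := by rw [hsubh, mul_sub, hf'F, hf'h, sub_self]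
  have hemf' : em * f' = 0 := by
    rw [hf']
    calc em * (h * Wc * tl x (m+1)) = (em * h) * (Wc * tl x (m+1)) := by noncomm_ring
      _ = 0 := by rw [hemh, zero_mul]
  have hf'em : f' * em = 0 := by
    rw [hem]
    calc f' * (g * Zc * x m) = (f' * g) * (Zc * x m) := by noncomm_ring
      _ = 0 := by rw [hf'g, zero_mul]
  obtain ⟨dl, hdl⟩ : ∃ t : R, t = em + f' - d.F := ⟨_, rfl⟩
  have hdd : dl * dl = 0 := by
    rw [hdl]
    calc (em + f' - d.F) * (em + f' - d.F)
        = em*em + em*f' - em*d.F + (f'*em + f'*f' - f'*d.F)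
          - (d.F*em + d.F*f' - d.F*d.F) := by noncomm_ring
      _ = em + 0 - g + (0 + f' - h) - (em + f' - d.F) := by
          rw [hemem, hemf', hemF, hf'em, hf'f', hf'F, hFem, hFf', h2]
      _ = d.F - (g + h) := by abel
      _ = 0 := by rw [hghF, sub_self]
  have huv : (1 + dl) * (1 - dl) = 1 := by
    have e1 : (1 + dl) * (1 - dl) = 1 - dl * dl := by noncomm_ring
    rw [e1, hdd, sub_zero]
  have hvu : (1 - dl) * (1 + dl) = 1 := by
    have e1 : (1 - dl) * (1 + dl) = 1 - dl * dl := by noncomm_ring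
    rw [e1, hdd, sub_zero]
  have hdF : dl * d.F = 0 := by
    rw [hdl, sub_mul, add_mul, hemF, hf'F, h2, ← hghF]; abel
  have hvF : (1 - dl) * d.F = d.F := by rw [sub_mul, one_mul, hdF, sub_zero]
  have hemdl : em * dl = em - g := by
    rw [hdl, mul_sub, mul_add, hemem, hemf', hemF]; abel
  have hemv : em * (1 - dl) = g := by rw [mul_sub, mul_one, hemdl]; abel
  have hf'dl : f' * dl = f' - h := by
    rw [hdl, mul_sub, mul_add, hf'em, hf'f', hf'F]; abel
  have hf'v : f' * (1 - dl) = h := by rw [mul_sub, mul_one, hf'dl]; abel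
  -- facts about old family members
  have hEg : ∀ i, i < m → d.E i * g = 0 := fun i hi => by
    rw [← hFg, ← mul_assoc, h5 i hi, zero_mul]
  have hEh : ∀ i, i < m → d.E i * h = 0 := fun i hi => by
    rw [← hFh, ← mul_assoc, h5 i hi, zero_mul]
  have hEem : ∀ i, i < m → d.E i * em = 0 := fun i hi => by
    rw [hem, show d.E i * (g * Zc * x m) = (d.E i * g) * (Zc * x m) from by noncomm_ring,
      hEg i hi, zero_mul]
  have hEf' : ∀ i, i < m → d.E i * f' = 0 := fun i hi => by
    rw [hf', show d.E i * (h * Wc * tl x (m+1)) = (d.E i * h) * (Wc * tl x (m+1)) from by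
      noncomm_ring, hEh i hi, zero_mul]
  have hEdl : ∀ i, i < m → d.E i * dl = 0 := fun i hi => by
    rw [hdl, mul_sub, mul_add, hEem i hi, hEf' i hi, h5 i hi]; abel
  have hEv : ∀ i, i < m → d.E i * (1 - dl) = d.E i := fun i hi => by
    rw [mul_sub, mul_one, hEdl i hi, sub_zero]
  have hgE : ∀ i, i < m → g * d.E i = 0 := fun i hi => by
    rw [← hgF, mul_assoc, h6 i hi, mul_zero]
  have hhE : ∀ i, i < m → h * d.E i = 0 := fun i hi => by
    rw [← hhF, mul_assoc, h6 i hi, mul_zero]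
  refine ⟨⟨fun i => if i = m then em else (1 - dl) * d.E i, f', h * Wc, 1 + dl, 1 - dl, g * Zc⟩,
    ⟨?_, ?_, ?_, ?_, ?_, ?_, ?_⟩, ?_, ?_, ?_, huv, hvu, hFf'⟩
  · -- s1
    show f' = (h * Wc) * tl x (m+1)
    rw [hf']
  · exact hf'f'
  · -- s3 idempotents
    intro i hi
    rcases Nat.lt_succ_iff_lt_or_eq.mp hi with him | rfl
    · show (if i = m then em else (1 - dl) * d.E i) * (if i = m then em else (1 - dl) * d.E i)
        = (if i = m then em else (1 - dl) * d.E i)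
      rw [if_neg (Nat.ne_of_lt him)]
      calc ((1 - dl) * d.E i) * ((1 - dl) * d.E i)
          = (1 - dl) * ((d.E i * (1 - dl)) * d.E i) := by noncomm_ring
        _ = (1 - dl) * d.E i := by rw [hEv i him, h3 i him]
    · show (if i = i then em else (1 - dl) * d.E i) * (if i = i then em else (1 - dl) * d.E i)
        = (if i = i then em else (1 - dl) * d.E i)
      rw [if_pos rfl]; exact hemem
  · -- s4 orthogonality
    intro i j hi hj hij
    show (if i = m then em else (1 - dl) * d.E i) * (if j = m then em else (1 - dl) * d.E j) = 0
    rcases Nat.lt_succ_iff_lt_or_eq.mp hi with him | rfl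
    · rcases Nat.lt_succ_iff_lt_or_eq.mp hj with hjm | rfl
      · rw [if_neg (Nat.ne_of_lt him), if_neg (Nat.ne_of_lt hjm)]
        calc ((1 - dl) * d.E i) * ((1 - dl) * d.E j)
            = (1 - dl) * ((d.E i * (1 - dl)) * d.E j) := by noncomm_ring
          _ = (1 - dl) * (d.E i * d.E j) := by rw [hEv i him]
          _ = 0 := by rw [h4 i j him hjm hij, mul_zero]
      · rw [if_neg (Nat.ne_of_lt him), if_pos rfl, mul_assoc, hEem i him, mul_zero]
    · rcases Nat.lt_succ_iff_lt_or_eq.mp hj with hjm | rfl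
      · rw [if_pos rfl, if_neg (Nat.ne_of_lt hjm), ← mul_assoc, hemv, hgE j hjm]
      · exact absurd rfl hij
  · -- s5
    intro i hi
    show (if i = m then em else (1 - dl) * d.E i) * f' = 0
    rcases Nat.lt_succ_iff_lt_or_eq.mp hi with him | rfl
    · rw [if_neg (Nat.ne_of_lt him), mul_assoc, hEf' i him, mul_zero]
    · rw [if_pos rfl]; exact hemf'
  · -- s6
    intro i hi
    show f' * (if i = m then em else (1 - dl) * d.E i) = 0
    rcases Nat.lt_succ_iff_lt_or_eq.mp hi with him | rfl
    · rw [if_neg (Nat.ne_of_lt him), ← mul_assoc, hf'v, hhE i him]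
    · rw [if_pos rfl]; exact hf'em
  · -- s7 sum
    show (∑ i ∈ Finset.range (m+1), if i = m then em else (1 - dl) * d.E i) + f' = 1
    rw [Finset.sum_range_succ, if_pos rfl]
    have hsc : (∑ i ∈ Finset.range m, if i = m then em else (1 - dl) * d.E i)
        = (1 - dl) * ∑ i ∈ Finset.range m, d.E i := by
      rw [Finset.mul_sum]
      exact Finset.sum_congr rfl fun i hi => by
        rw [if_neg (Nat.ne_of_lt (Finset.mem_range.mp hi))]
    rw [hsc]
    have hsum' : ∑ i ∈ Finset.range m, d.E i = 1 - d.F := by rw [← h7]; abel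
    rw [hsum', mul_sub, mul_one, hvF, hdl]
    abel
  · -- Q t1
    show (if m = m then em else (1 - dl) * d.E m) = (g * Zc) * x m
    rw [if_pos rfl, hem]
  · -- Q t2
    intro i hi
    show (if i = m then em else (1 - dl) * d.E i) = (1 - dl) * d.E i
    rw [if_neg hi]
  · -- Q t3
    show 1 + dl = 1 + (if m = m then em else (1 - dl) * d.E m) + f' - d.F
    rw [if_pos rfl, hdl]; abel

end A0X

namespace A0X

variable {R : Type*} [Ring R]

noncomputable def st (hsuit : IsSuitableRing R) (x : ℕ → R) : (m : ℕ) → {d : Dat R // Pm x m d}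
  | 0 => ⟨⟨fun _ => 0, 1, 1, 1, 1, 0⟩,
      by
        exact ⟨by simp [tl], by simp, fun i hi => absurd hi (by omega),
          fun i j hi _ _ => absurd hi (by omega), fun i hi => absurd hi (by omega),
          fun i hi => absurd hi (by omega), by simp⟩⟩
  | m + 1 => ⟨(step_ex hsuit x m (st hsuit x m).1 (st hsuit x m).2).choose,
      (step_ex hsuit x m (st hsuit x m).1 (st hsuit x m).2).choose_spec.1⟩

theorem stQ (hsuit : IsSuitableRing R) (x : ℕ → R) (m : ℕ) :
    Q x m (st hsuit x m).1 (st hsuit x (m+1)).1 :=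
  (step_ex hsuit x m (st hsuit x m).1 (st hsuit x m).2).choose_spec.2

def pR (w : ℕ → R) (m : ℕ) : ℕ → R
  | 0 => 1
  | K + 1 => if m ≤ K then pR w m K * w K else 1

def pL (w : ℕ → R) (m : ℕ) : ℕ → R
  | 0 => 1
  | K + 1 => if m ≤ K then w K * pL w m K else 1

theorem pR_succ (w : ℕ → R) (m K : ℕ) (h : m ≤ K) : pR w m (K+1) = pR w m K * w K := by
  simp [pR, h]

theorem pL_succ (w : ℕ → R) (m K : ℕ) (h : m ≤ K) : pL w m (K+1) = w K * pL w m K := by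
  simp [pL, h]

theorem pR_stop (w : ℕ → R) (m : ℕ) : ∀ K, K ≤ m → pR w m K = 1 := by
  intro K
  cases K with
  | zero => intro _; rfl
  | succ K => intro h; simp [pR, show ¬ m ≤ K by omega]

theorem pL_stop (w : ℕ → R) (m : ℕ) : ∀ K, K ≤ m → pL w m K = 1 := by
  intro K
  cases K with
  | zero => intro _; rfl
  | succ K => intro h; simp [pL, show ¬ m ≤ K by omega]

end A0X

namespace A0X

open Filter

variable {R : Type*} [Ring R] [TopologicalSpace R] [IsTopologicalRing R]

theorem natCase (hsuit : IsSuitableRing R) (hnice : IsNiceTopology R)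
    (hunits : ∀ w ∈ closure {u : R | IsUnit u}, IsUnit w)
    (x : ℕ → R) (hx : HasSum x 1) :
    ∃ e : ℕ → R, Summable e ∧ (∀ i, IsIdempotentElem (e i)) ∧
      (∀ i j, i ≠ j → e i * e j = 0) ∧ (∀ i, ∃ r, e i = r * x i) ∧ HasSum e 1 := by
  haveI hT2 : T2Space R := hnice.hausdorff
  obtain ⟨ES, hES⟩ : ∃ ES : ℕ → ℕ → R, ES = fun m i => (st hsuit x m).1.E i := ⟨_, rfl⟩
  obtain ⟨fS, hfS⟩ : ∃ fS : ℕ → R, fS = fun m => (st hsuit x m).1.F := ⟨_, rfl⟩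
  obtain ⟨tS, htS⟩ : ∃ tS : ℕ → R, tS = fun m => (st hsuit x m).1.t := ⟨_, rfl⟩
  obtain ⟨eS, heS⟩ : ∃ eS : ℕ → R, eS = fun k => ES (k+1) k := ⟨_, rfl⟩
  obtain ⟨uS, huS⟩ : ∃ uS : ℕ → R, uS = fun k => (st hsuit x (k+1)).1.u := ⟨_, rfl⟩
  obtain ⟨vS, hvS⟩ : ∃ vS : ℕ → R, vS = fun k => (st hsuit x (k+1)).1.v := ⟨_, rfl⟩
  obtain ⟨ZS, hZS⟩ : ∃ ZS : ℕ → R, ZS = fun k => (st hsuit x (k+1)).1.Z := ⟨_, rfl⟩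
  have pm1 : ∀ m, fS m = tS m * tl x m := by
    simp only [hfS, htS]; exact fun m => (st hsuit x m).2.1
  have pm2 : ∀ m, fS m * fS m = fS m := by
    simp only [hfS]; exact fun m => (st hsuit x m).2.2.1
  have pm3 : ∀ m i, i < m → ES m i * ES m i = ES m i := by
    simp only [hES]; exact fun m i h => (st hsuit x m).2.2.2.1 i h
  have pm4 : ∀ m i j, i < m → j < m → i ≠ j → ES m i * ES m j = 0 := by
    simp only [hES]; exact fun m i j hi hj hij => (st hsuit x m).2.2.2.2.1 i j hi hj hij
  have pm5 : ∀ m i, i < m → ES m i * fS m = 0 := by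
    simp only [hES, hfS]; exact fun m i h => (st hsuit x m).2.2.2.2.2.1 i h
  have pm6 : ∀ m i, i < m → fS m * ES m i = 0 := by
    simp only [hES, hfS]; exact fun m i h => (st hsuit x m).2.2.2.2.2.2.1 i h
  have pm7 : ∀ m, (∑ i ∈ Finset.range m, ES m i) + fS m = 1 := by
    simp only [hES, hfS]; exact fun m => (st hsuit x m).2.2.2.2.2.2.2
  have q1 : ∀ k, eS k = ZS k * x k := by
    simp only [heS, hES, hZS]; exact fun k => (stQ hsuit x k).1
  have q2 : ∀ k i, i ≠ k → ES (k+1) i = vS k * ES k i := by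
    simp only [hES, hvS]; exact fun k i h => (stQ hsuit x k).2.1 i h
  have q3 : ∀ k, uS k = 1 + eS k + fS (k+1) - fS k := by
    simp only [heS, hES, huS, hfS]; exact fun k => (stQ hsuit x k).2.2.1
  have q4 : ∀ k, uS k * vS k = 1 := by
    simp only [huS, hvS]; exact fun k => (stQ hsuit x k).2.2.2.1
  have q5 : ∀ k, vS k * uS k = 1 := by
    simp only [huS, hvS]; exact fun k => (stQ hsuit x k).2.2.2.2.1
  have q6 : ∀ k, fS k * fS (k+1) = fS (k+1) := by
    simp only [hfS]; exact fun k => (stQ hsuit x k).2.2.2.2.2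
  have heSES : ∀ k, eS k = ES (k+1) k := fun k => by simp only [heS]
  have heidem : ∀ i, eS i * eS i = eS i := fun i => by
    rw [heSES i]; exact pm3 (i+1) i (Nat.lt_succ_self i)
  -- closed form for stage family
  have hEcl : ∀ i K, i < K → ES K i = pL vS (i+1) K * eS i := by
    intro i K
    induction K with
    | zero => omega
    | succ K ih =>
      intro hK
      rcases Nat.lt_succ_iff_lt_or_eq.mp hK with hK' | rfl
      · rw [q2 K i (by omega), ih hK', pL_succ vS (i+1) K (by omega), mul_assoc]
      · rw [pL_stop vS (i+1) (i+1) le_rfl, one_mul, heSES]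
  have hpLR : ∀ m K, pR uS m K * pL vS m K = 1 ∧ pL vS m K * pR uS m K = 1 := by
    intro m K
    induction K with
    | zero => constructor <;> simp [pR, pL]
    | succ K ih =>
      by_cases h : m ≤ K
      · rw [pR_succ _ _ _ h, pL_succ _ _ _ h]
        constructor
        · calc pR uS m K * uS K * (vS K * pL vS m K)
              = pR uS m K * (uS K * vS K) * pL vS m K := by noncomm_ring
            _ = 1 := by rw [q4 K, mul_one, ih.1]
        · calc vS K * pL vS m K * (pR uS m K * uS K)
              = vS K * (pL vS m K * pR uS m K) * uS K := by noncomm_ring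
            _ = 1 := by rw [ih.2, mul_one, q5 K]
      · constructor <;> simp [pR, pL, h]
  have he_fromE : ∀ i K, i < K → pR uS (i+1) K * ES K i = eS i := by
    intro i K h
    rw [hEcl i K h, ← mul_assoc, (hpLR (i+1) K).1, one_mul]
  have h_ef : ∀ i K, i < K → eS i * fS K = 0 := by
    intro i K h
    rw [← he_fromE i K h, mul_assoc, pm5 K i h, mul_zero]
  have h_ee : ∀ i k, i < k → eS i * eS k = 0 := by
    intro i k h
    rw [← he_fromE i (k+1) (by omega), mul_assoc,
      show ES (k+1) i * eS k = 0 from by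
        rw [heSES k]; exact pm4 (k+1) i k (by omega) (Nat.lt_succ_self k) (by omega),
      mul_zero]
  have h_fchain : ∀ j L, j ≤ L → fS j * fS L = fS L := by
    intro j L
    induction L with
    | zero => intro h; have : j = 0 := by omega
              subst this; exact pm2 0
    | succ L ih =>
      intro h
      by_cases hj : j = L + 1
      · subst hj; exact pm2 (L+1)
      · rw [← q6 L, ← mul_assoc, ih (by omega)]
  have h_uf : ∀ k L, k < L → uS k * fS L = fS L := by
    intro k L h
    rw [q3 k, sub_mul, add_mul, add_mul, one_mul, h_ef k L h, h_fchain (k+1) L h,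
      h_fchain k L (by omega)]
    abel
  have h_pRf : ∀ m K L, K ≤ L → pR uS m K * fS L = fS L := by
    intro m K L
    induction K with
    | zero => intro _; simp [pR]
    | succ K ih =>
      intro hKL
      by_cases h : m ≤ K
      · rw [pR_succ _ _ _ h, mul_assoc, h_uf K L (by omega), ih (by omega)]
      · simp [pR, h]
  have h_epR : ∀ i mm K, i < mm → eS i * pR uS mm K = eS i := by
    intro i mm K him
    induction K with
    | zero => simp [pR]
    | succ K ih =>
      by_cases h : mm ≤ K
      · rw [pR_succ _ _ _ h, ← mul_assoc, ih]
        rw [q3 K, mul_sub, mul_add, mul_add, mul_one, h_ee i K (by omega),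
          h_ef i (K+1) (by omega), h_ef i K (by omega)]
        abel
      · simp [pR, h]
  have h_tele : ∀ mm K, mm ≤ K →
      pR uS mm K = 1 + (∑ k ∈ Finset.range K, if mm ≤ k then pR uS mm k * eS k else 0)
        + fS K - fS mm := by
    intro mm K
    induction K with
    | zero => intro h
              have : mm = 0 := by omega
              subst this; simp [pR]
    | succ K ih =>
      intro hK
      by_cases hmK : mm ≤ K
      · rw [pR_succ _ _ _ hmK, q3 K]
        have expand : pR uS mm K * (1 + eS K + fS (K+1) - fS K)
            = pR uS mm K + pR uS mm K * eS K + pR uS mm K * fS (K+1)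
              - pR uS mm K * fS K := by noncomm_ring
        rw [expand, h_pRf mm K (K+1) (by omega), h_pRf mm K K le_rfl,
          Finset.sum_range_succ, if_pos hmK, ih hmK]
        abel
      · have hm : mm = K + 1 := by omega
        subst hm
        rw [pR_stop uS (K+1) (K+1) le_rfl,
          Finset.sum_eq_zero fun k hk => if_neg (by
            have := Finset.mem_range.mp hk; omega)]
        abel
  -- ANALYSIS PART
  have hxs : Summable x := ⟨1, hx⟩
  have hLMS : ∀ (x' r' : ℕ → R), Summable x' → Summable fun i => r' i * x' i := by
    intro x' r' hx'
    have h1 : Summable ((fun i => x' i) ∘ (Equiv.ulift (α := ℕ))) :=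
      Equiv.ulift.summable_iff.mpr hx'
    have h2 := hnice.leftMultipleSummable (fun i : ULift ℕ => x' i.down)
      (fun i : ULift ℕ => r' i.down) h1
    exact Equiv.ulift.summable_iff.mp h2
  have hx0 : Tendsto x atTop (nhds 0) := by
    have h1' := hx.tendsto_sum_nat
    have h2' : Tendsto (fun n => ∑ i ∈ Finset.range (n+1), x i) atTop (nhds 1) :=
      h1'.comp (tendsto_add_atTop_nat 1)
    have h3' := h2'.sub h1'
    rw [sub_self] at h3'
    refine h3'.congr fun n => ?_
    rw [Finset.sum_range_succ]; abel
  have htl0 : Tendsto (tl x) atTop (nhds 0) := by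
    have h' := Tendsto.sub
      (tendsto_const_nhds : Tendsto (fun _ : ℕ => (1:R)) atTop (nhds 1)) hx.tendsto_sum_nat
    rw [sub_self] at h'
    exact h'
  have habsorb : ∀ (a b : ℕ → R), Tendsto b atTop (nhds 0) →
      Tendsto (fun n => a n * b n) atTop (nhds 0) := by
    intro a b hb
    rw [Filter.tendsto_def]
    intro s hs
    obtain ⟨I, hI0, hIs⟩ := hnice.linear s hs
    have hbI : ∀ᶠ n in atTop, b n ∈ (I : Set R) := hb hI0
    filter_upwards [hbI] with n hn
    exact hIs (I.mul_mem_left (a n) hn)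
  have hf0 : Tendsto fS atTop (nhds 0) :=
    (habsorb tS (tl x) htl0).congr fun m => (pm1 m).symm
  obtain ⟨rS, hrS⟩ : ∃ rS : ℕ → ℕ → R,
      rS = fun mm k => if mm ≤ k then pR uS mm k * ZS k else 0 := ⟨_, rfl⟩
  have hsummm : ∀ mm, Summable (fun k => rS mm k * x k) :=
    fun mm => hLMS x (rS mm) hxs
  obtain ⟨sg, hsg⟩ : ∃ sg : ℕ → R, sg = fun mm => ∑' k, rS mm k * x k := ⟨_, rfl⟩
  have hsgsum : ∀ mm, HasSum (fun k => rS mm k * x k) (sg mm) := by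
    intro mm; rw [hsg]; exact (hsummm mm).hasSum
  have hterm : ∀ mm k, rS mm k * x k = if mm ≤ k then pR uS mm k * eS k else 0 := by
    intro mm k
    by_cases h : mm ≤ k
    · rw [hrS]; simp only []
      rw [if_pos h, if_pos h, mul_assoc, ← q1 k]
    · rw [hrS]; simp only []
      rw [if_neg h, if_neg h, zero_mul]
  obtain ⟨T, hT⟩ : ∃ T : ℕ → R, T = fun mm => 1 + sg mm - fS mm := ⟨_, rfl⟩
  have hTtend : ∀ mm, Tendsto (fun K => pR uS mm K) atTop (nhds (T mm)) := by
    intro mm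
    have hpart : Tendsto (fun K => ∑ k ∈ Finset.range K, rS mm k * x k) atTop (nhds (sg mm)) :=
      (hsgsum mm).tendsto_sum_nat
    have hcomb := (((tendsto_const_nhds :
        Tendsto (fun _ : ℕ => (1:R)) atTop (nhds 1)).add hpart).add hf0).sub
        (tendsto_const_nhds : Tendsto (fun _ : ℕ => fS mm) atTop (nhds (fS mm)))
    have hlim : 1 + sg mm + 0 - fS mm = T mm := by rw [hT]; simp only []; rw [add_zero]
    rw [hlim] at hcomb
    refine Tendsto.congr' ?_ hcomb
    filter_upwards [eventually_ge_atTop mm] with K hK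
    rw [h_tele mm K hK]
    exact congrArg (fun S => 1 + S + fS K - fS mm)
      (Finset.sum_congr rfl fun k _ => hterm mm k)
  have hpRunit : ∀ mm K, IsUnit (pR uS mm K) := by
    intro mm K
    induction K with
    | zero => simpa [pR] using isUnit_one
    | succ K ih =>
      by_cases h : mm ≤ K
      · rw [pR_succ _ _ _ h]
        exact ih.mul ⟨⟨uS K, vS K, q4 K, q5 K⟩, rfl⟩
      · simpa [pR, h] using isUnit_one
  have hTunit : ∀ mm, IsUnit (T mm) := fun mm =>
    hunits _ (mem_closure_of_tendsto (hTtend mm)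
      (Filter.Eventually.of_forall fun K => hpRunit mm K))
  have hTinv : ∀ mm, ∃ Tv : R, T mm * Tv = 1 ∧ Tv * T mm = 1 := by
    intro mm
    obtain ⟨u, hu⟩ := hTunit mm
    exact ⟨↑u⁻¹, by rw [← hu]; exact u.mul_inv, by rw [← hu]; exact u.inv_mul⟩
  choose Tv hTv1 hTv2 using hTinv
  have hpRsplit : ∀ mm j K, mm ≤ j → j ≤ K → pR uS mm K = pR uS mm j * pR uS j K := by
    intro mm j K hmj
    induction K with
    | zero => intro h
              have : j = 0 := by omega
              subst this; simp [pR]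
    | succ K ih =>
      intro hjK
      by_cases h : j ≤ K
      · rw [pR_succ _ _ _ (le_trans hmj h), pR_succ _ _ _ h, ih h, mul_assoc]
      · have : j = K + 1 := by omega
        subst this
        rw [pR_stop uS (K+1) (K+1) le_rfl, mul_one]
  have hTsplit : ∀ mm j, mm ≤ j → T mm = pR uS mm j * T j := by
    intro mm j hmj
    refine tendsto_nhds_unique (hTtend mm) ?_
    have hc := (hTtend j).const_mul (pR uS mm j)
    refine Tendsto.congr' ?_ hc
    filter_upwards [eventually_ge_atTop j] with K hK
    exact (hpRsplit mm j K hmj hK).symm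
  have hTvsplit : ∀ mm j, mm ≤ j → Tv mm = Tv j * pL vS mm j := by
    intro mm j h
    have h1' : T mm * (Tv j * pL vS mm j) = 1 := by
      rw [hTsplit mm j h]
      calc pR uS mm j * T j * (Tv j * pL vS mm j)
          = pR uS mm j * (T j * Tv j) * pL vS mm j := by noncomm_ring
        _ = 1 := by rw [hTv1 j, mul_one, (hpLR mm j).1]
    calc Tv mm = Tv mm * (T mm * (Tv j * pL vS mm j)) := by rw [h1', mul_one]
      _ = (Tv mm * T mm) * (Tv j * pL vS mm j) := by noncomm_ring
      _ = Tv j * pL vS mm j := by rw [hTv2 mm, one_mul]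
  have h_eT : ∀ i j, i < j → eS i * T j = eS i := by
    intro i j hij
    have h1' : Tendsto (fun K => eS i * pR uS j K) atTop (nhds (eS i * T j)) :=
      (hTtend j).const_mul (eS i)
    have h2' : (fun K => eS i * pR uS j K) = fun _ => eS i :=
      funext fun K => h_epR i j K hij
    rw [h2'] at h1'
    exact tendsto_nhds_unique h1' tendsto_const_nhds
  have h_eTv : ∀ i j, i < j → eS i * Tv j = eS i := by
    intro i j hij
    calc eS i * Tv j = (eS i * T j) * Tv j := by rw [h_eT i j hij]
      _ = eS i * (T j * Tv j) := by noncomm_ring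
      _ = eS i := by rw [hTv1 j, mul_one]
  obtain ⟨eF, heF⟩ : ∃ eF : ℕ → R, eF = fun i => Tv (i+1) * eS i := ⟨_, rfl⟩
  have heFi : ∀ i, eF i = Tv (i+1) * eS i := fun i => by rw [heF]
  have heFidem : ∀ i, eF i * eF i = eF i := by
    intro i
    rw [heFi]
    calc Tv (i+1) * eS i * (Tv (i+1) * eS i)
        = Tv (i+1) * ((eS i * Tv (i+1)) * eS i) := by noncomm_ring
      _ = Tv (i+1) * eS i := by rw [h_eTv i (i+1) (Nat.lt_succ_self i), heidem i]
  have horth : ∀ i j, i ≠ j → eF i * eF j = 0 := by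
    intro i j hij
    rw [heFi, heFi]
    rcases Nat.lt_or_ge i j with h | h
    · calc Tv (i+1) * eS i * (Tv (j+1) * eS j)
          = Tv (i+1) * ((eS i * Tv (j+1)) * eS j) := by noncomm_ring
        _ = Tv (i+1) * (eS i * eS j) := by rw [h_eTv i (j+1) (by omega)]
        _ = 0 := by rw [h_ee i j h, mul_zero]
    · have hji : j < i := by omega
      calc Tv (i+1) * eS i * (Tv (j+1) * eS j)
          = Tv (i+1) * eS i * ((Tv (i+1) * pL vS (j+1) (i+1)) * eS j) := by
            rw [hTvsplit (j+1) (i+1) (by omega)]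
        _ = Tv (i+1) * ((eS i * Tv (i+1)) * (pL vS (j+1) (i+1) * eS j)) := by noncomm_ring
        _ = Tv (i+1) * (eS i * (pL vS (j+1) (i+1) * eS j)) := by
            rw [h_eTv i (i+1) (Nat.lt_succ_self i)]
        _ = Tv (i+1) * (eS i * ES (i+1) j) := by rw [← hEcl j (i+1) (by omega)]
        _ = 0 := by
            rw [show eS i * ES (i+1) j = 0 from by
              rw [heSES i]; exact pm4 (i+1) i j (Nat.lt_succ_self i) (by omega) hij, mul_zero]
  have hmemF : ∀ i, eF i = (Tv (i+1) * ZS i) * x i := by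
    intro i
    rw [heFi, q1 i, ← mul_assoc]
  have hsummF : Summable eF :=
    (hLMS x (fun i => Tv (i+1) * ZS i) hxs).congr
      fun i => (hmemF i).symm
  have hpartial : ∀ mm, ∑ i ∈ Finset.range mm, eF i = Tv mm * (1 - fS mm) := by
    intro mm
    have hterm' : ∀ i, i < mm → eF i = Tv mm * ES mm i := by
      intro i hi
      rw [heFi, hTvsplit (i+1) mm (by omega), mul_assoc, ← hEcl i mm hi]
    rw [Finset.sum_congr rfl fun i hi => hterm' i (Finset.mem_range.mp hi), ← Finset.mul_sum]
    congr 1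
    rw [eq_sub_iff_add_eq]
    exact pm7 mm
  have hTvf : Tendsto (fun mm => Tv mm * fS mm) atTop (nhds 0) := by
    refine (habsorb (fun mm => Tv mm * tS mm) (tl x) htl0).congr fun mm => ?_
    rw [mul_assoc, ← pm1 mm]
  have hTvsg : Tendsto (fun mm => Tv mm * sg mm) atTop (nhds 0) := by
    rw [Filter.tendsto_def]
    intro s hs
    obtain ⟨I, hI0, hIs⟩ := hnice.linear s hs
    have hIop : IsOpen (I : Set R) := by
      have := AddSubgroup.isOpen_of_mem_nhds I.toAddSubgroup
        (g := (0:R)) (by rwa [Submodule.coe_toAddSubgroup])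
      rwa [Submodule.coe_toAddSubgroup] at this
    have hIcl : IsClosed (I : Set R) := by
      have := AddSubgroup.isClosed_of_isOpen I.toAddSubgroup
        (by rwa [Submodule.coe_toAddSubgroup])
      rwa [Submodule.coe_toAddSubgroup] at this
    obtain ⟨N, hN⟩ := Filter.eventually_atTop.mp (hx0 hI0)
    refine Filter.eventually_atTop.mpr ⟨N, fun mm hmm => ?_⟩
    have hps : ∀ K, (∑ k ∈ Finset.range K, rS mm k * x k) ∈ I := by
      intro K
      refine Submodule.sum_mem I fun k _ => ?_
      by_cases h : mm ≤ k
      · exact I.mul_mem_left (rS mm k) (hN k (le_trans hmm h))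
      · have : rS mm k = 0 := by rw [hrS]; simp only []; rw [if_neg h]
        rw [this, zero_mul]; exact I.zero_mem
    have hsgI : sg mm ∈ (I : Set R) :=
      hIcl.mem_of_tendsto (hsgsum mm).tendsto_sum_nat (Filter.Eventually.of_forall hps)
    exact hIs (I.mul_mem_left (Tv mm) hsgI)
  have hTv0 : Tendsto Tv atTop (nhds 1) := by
    have hId : ∀ mm, Tv mm = 1 + (Tv mm * fS mm - Tv mm * sg mm) := by
      intro mm
      have h1' : Tv mm * (1 - T mm) = Tv mm - 1 := by rw [mul_sub, mul_one, hTv2 mm]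
      have h2' : (1 : R) - T mm = fS mm - sg mm := by rw [hT]; simp only []; abel
      rw [h2', mul_sub] at h1'
      rw [h1']; abel
    have hcomb := (tendsto_const_nhds :
      Tendsto (fun _ : ℕ => (1:R)) atTop (nhds 1)).add (hTvf.sub hTvsg)
    have : (1:R) + (0 - 0) = 1 := by simp
    rw [this] at hcomb
    exact hcomb.congr fun mm => (hId mm).symm
  have hsum1 : Tendsto (fun mm => ∑ i ∈ Finset.range mm, eF i) atTop (nhds 1) := by
    have hcomb := hTv0.sub hTvf
    rw [sub_zero] at hcomb
    exact hcomb.congr fun mm => by rw [hpartial mm, mul_sub, mul_one]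
  have hhs : HasSum eF 1 := by
    have h1' := hsummF.hasSum
    have h2' := h1'.tendsto_sum_nat
    have h3' : (∑' i, eF i) = 1 := tendsto_nhds_unique h2' hsum1
    rwa [h3'] at h1'
  exact ⟨eF, hsummF, fun i => heFidem i, horth, fun i => ⟨Tv (i+1) * ZS i, hmemF i⟩, hhs⟩

end A0X

/-- A suitable ring with a nice topology, in which every convergent limit
of units is a unit (i.e. every element of the closure of the unit group is a unit), is an
ℵ₀-exchange ring. -/
theorem suitable_nice_limitsOfUnits_isAleph0ExchangeRing
    (R : Type*) [Ring R] [TopologicalSpace R] [IsTopologicalRing R]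
    (hsuit : IsSuitableRing R) (hnice : IsNiceTopology R)
    (hunits : ∀ w ∈ closure {u : R | IsUnit u}, IsUnit w) :
    IsAleph0ExchangeRing R := by
  intro ι _ x hx
  obtain ⟨emb, hemb⟩ := Countable.exists_injective_nat ι
  have hx' : HasSum (Function.extend emb x 0) 1 := (hasSum_extend_zero hemb).mpr hx
  obtain ⟨e', hsm, hid, hor, hmem, hhs⟩ := A0X.natCase hsuit hnice hunits _ hx'
  have hzero : ∀ n ∉ Set.range emb, e' n = 0 := by
    intro n hn
    obtain ⟨r, hr⟩ := hmem n
    rw [hr, Function.extend_apply' x (0 : ℕ → R) n (by simpa [Set.mem_range] using hn)]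
    simp
  have hhs2 : HasSum (e' ∘ emb) 1 := (hemb.hasSum_iff hzero).mpr hhs
  refine ⟨e' ∘ emb, ⟨1, hhs2⟩, fun i => hid _,
    fun i j hij => hor _ _ (fun hc => hij (hemb hc)), fun i => ?_, hhs2⟩
  obtain ⟨r, hr⟩ := hmem (emb i)
  refine ⟨r, ?_⟩
  show e' (emb i) = r * x i
  rw [hr, hemb.extend_apply]
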